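/- Let (a,b,c) be a UM triple of positive integers with gcd(a,b,c) = 1, p = gcd(a,b), q = gcd(a,c), r = gcd(b,c), a = dpq, b = epr, c = fqr, and suppose f ∈ S(d,e). Then a positive integer is a gap of S(a,b,c) if and only if it has the form (de + f)pqr - ia - jb - kc for some positive integers i, j, k; in particular, the beta set of the unique maximal (a,b,c)-core is exactly this set. -/

import Mathlib

/-- A partition: a nonincreasing list of positive integers. -/
structure ListPartition where
  parts : List ℕ
  sorted : parts.Pairwise (· ≥ ·)
  pos : ∀ x ∈ parts, 0 < x

namespace ListPartition

/-- The i-th part (0-indexed), or 0 past the end. -/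
def part (lam : ListPartition) (i : ℕ) : ℕ := lam.parts.getD i 0

/-- Hook length of the cell in (0-indexed) row i and (1-indexed) column j:
    λ_i - j + #{rows k > i with λ_k ≥ j} + 1. -/
def hook (lam : ListPartition) (i j : ℕ) : ℕ :=
  lam.part i - j + ((List.range lam.parts.length).countP
    fun k => decide (i < k ∧ j ≤ lam.part k)) + 1

/-- λ is an A-core: no hook length lies in A. -/
def IsCore (A : Finset ℕ) (lam : ListPartition) : Prop :=
  ∀ i j : ℕ, i < lam.parts.length → 1 ≤ j → j ≤ lam.part i → lam.hook i j ∉ A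

/-- The beta set of λ: first-column hook lengths {λ_i + r - i} (1-indexed form). -/
def beta (lam : ListPartition) : Finset ℕ :=
  (Finset.range lam.parts.length).image fun i => lam.part i + (lam.parts.length - 1 - i)

/-- μ is a subpartition of λ. -/
def Sub (mu lam : ListPartition) : Prop :=
  mu.parts.length ≤ lam.parts.length ∧ ∀ i : ℕ, mu.part i ≤ lam.part i

end ListPartition

/-- Membership in the numerical semigroup generated by the finite set A. -/
def SemiS (A : Finset ℕ) (n : ℕ) : Prop := ∃ f : ℕ → ℕ, n = ∑ a ∈ A, f a * a

/-- n is a gap of S(A). -/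
def GapS (A : Finset ℕ) (n : ℕ) : Prop := 0 < n ∧ ¬ SemiS A n

/-- A is UM: some A-core contains every A-core as a subpartition. -/
def UM (A : Finset ℕ) : Prop :=
  ∃ κ : ListPartition, ListPartition.IsCore A κ ∧ ∀ μ : ListPartition, ListPartition.IsCore A μ → μ.Sub κ

namespace ListPartition

lemma part_zero (lam : ListPartition) {i : ℕ} (h : lam.parts.length ≤ i) : lam.part i = 0 :=
  List.getD_eq_default _ _ h

lemma part_pos (lam : ListPartition) {i : ℕ} (h : i < lam.parts.length) : 0 < lam.part i := by
  apply lam.pos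
  rw [part, List.getD_eq_getElem _ _ h]
  exact List.getElem_mem _

lemma part_anti (lam : ListPartition) {i j : ℕ} (h : i ≤ j) : lam.part j ≤ lam.part i := by
  by_cases hj : j < lam.parts.length
  · have hi : i < lam.parts.length := lt_of_le_of_lt h hj
    rcases eq_or_lt_of_le h with rfl | h'
    · exact le_refl _
    · rw [part, part, List.getD_eq_getElem _ _ hj, List.getD_eq_getElem _ _ hi]
      exact List.pairwise_iff_getElem.mp lam.sorted i j hi hj h'
  · rw [lam.part_zero (not_lt.mp hj)]; exact Nat.zero_le _
end ListPartition

namespace ListPartition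

/-- shorthand for beta entries -/
def bet (lam : ListPartition) (i : ℕ) : ℕ := lam.part i + (lam.parts.length - 1 - i)

lemma mem_beta {lam : ListPartition} {n : ℕ} :
    n ∈ lam.beta ↔ ∃ i, i < lam.parts.length ∧ lam.bet i = n := by
  simp [beta, bet, Finset.mem_image, Finset.mem_range]

lemma bet_pos (lam : ListPartition) {i : ℕ} (h : i < lam.parts.length) : 0 < lam.bet i :=
  Nat.lt_of_lt_of_le (lam.part_pos h) (Nat.le_add_right _ _)

lemma bet_strict_anti (lam : ListPartition) {i j : ℕ} (hij : i < j) (hj : j < lam.parts.length) :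
    lam.bet j < lam.bet i := by
  have h1 := lam.part_anti (le_of_lt hij)
  have : lam.parts.length - 1 - j < lam.parts.length - 1 - i := by omega
  unfold bet; omega

lemma bet_anti (lam : ListPartition) {i j : ℕ} (hij : i ≤ j) (hj : j < lam.parts.length) :
    lam.bet j ≤ lam.bet i := by
  rcases eq_or_lt_of_le hij with rfl | h
  · exact le_refl _
  · exact le_of_lt (lam.bet_strict_anti h hj)

lemma bet_add_anti (lam : ListPartition) {i j : ℕ} (hij : i ≤ j) (hi : i < lam.parts.length)
    (hj : j < lam.parts.length) : lam.bet j + j ≤ lam.bet i + i := by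
  have := lam.part_anti hij
  unfold bet; omega

lemma card_beta (lam : ListPartition) : lam.beta.card = lam.parts.length := by
  rw [beta, Finset.card_image_of_injOn, Finset.card_range]
  intro i hi j hj hij
  simp only [Finset.coe_range, Set.mem_Iio] at hi hj
  have hb : lam.bet i = lam.bet j := hij
  by_contra hne
  rcases lt_or_gt_of_ne hne with h | h
  · exact (lam.bet_strict_anti h hj).ne hb.symm
  · exact (lam.bet_strict_anti h hi).ne hb

lemma zero_not_mem_beta (lam : ListPartition) : 0 ∉ lam.beta := by
  rw [mem_beta]
  rintro ⟨i, hi, h⟩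
  exact absurd h (Nat.ne_of_gt (lam.bet_pos hi))
end ListPartition

namespace ListPartition

lemma countP_eq_card_filter (n : ℕ) (p : ℕ → Prop) [DecidablePred p] :
    (List.range n).countP (fun k => decide (p k)) = ((Finset.range n).filter p).card := by
  rw [List.countP_eq_length_filter]; rfl

lemma filter_gt_range (i r : ℕ) :
    (Finset.range r).filter (fun k => i < k) = Finset.Ico (i+1) r := by
  ext k; simp [Finset.mem_filter, Finset.mem_range, Finset.mem_Ico, and_comm, Nat.add_one_le_iff]

/-- the count of cells in row i strictly right of column j among rows below -/
def tcnt (lam : ListPartition) (i j : ℕ) : ℕ :=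
  ((Finset.range lam.parts.length).filter (fun k => i < k ∧ lam.part k < j)).card

lemma cnt_add_tcnt (lam : ListPartition) (i j : ℕ) (hi : i < lam.parts.length) :
    ((Finset.range lam.parts.length).filter (fun k => i < k ∧ j ≤ lam.part k)).card
      + lam.tcnt i j = lam.parts.length - 1 - i := by
  set r := lam.parts.length
  have h1 : (Finset.range r).filter (fun k => i < k ∧ j ≤ lam.part k)
      = ((Finset.range r).filter (fun k => i < k)).filter (fun k => j ≤ lam.part k) := by
    rw [Finset.filter_filter]
  have h2 : (Finset.range r).filter (fun k => i < k ∧ lam.part k < j)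
      = ((Finset.range r).filter (fun k => i < k)).filter (fun k => ¬ (j ≤ lam.part k)) := by
    rw [Finset.filter_filter]
    apply Finset.filter_congr
    intro k _
    simp [not_le]
  rw [tcnt, h1, h2, Finset.card_filter_add_card_filter_not, filter_gt_range,
    Nat.card_Ico]
  omega

lemma hook_eq (lam : ListPartition) {i j : ℕ} (hi : i < lam.parts.length) (hj1 : 1 ≤ j)
    (hj2 : j ≤ lam.part i) :
    lam.hook i j + (j - 1 + lam.tcnt i j) = lam.bet i := by
  have h := lam.cnt_add_tcnt i j hi
  rw [hook, countP_eq_card_filter, bet]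
  omega

lemma filter_upclosed {r : ℕ} (p : ℕ → Prop) [DecidablePred p]
    (mono : ∀ k k', p k → k ≤ k' → k' < r → p k') {k : ℕ} (hk : k < r) :
    p k ↔ r - ((Finset.range r).filter p).card ≤ k := by
  constructor
  · intro hpk
    have hsub : Finset.Ico k r ⊆ (Finset.range r).filter p := by
      intro x hx
      rw [Finset.mem_Ico] at hx
      rw [Finset.mem_filter, Finset.mem_range]
      exact ⟨hx.2, mono k x hpk hx.1 hx.2⟩
    have := Finset.card_le_card hsub
    rw [Nat.card_Ico] at this
    omega
  · intro hle
    by_contra hnp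
    have hsub : (Finset.range r).filter p ⊆ Finset.Ico (k+1) r := by
      intro x hx
      rw [Finset.mem_filter, Finset.mem_range] at hx
      rw [Finset.mem_Ico]
      refine ⟨?_, hx.1⟩
      by_contra hxk
      exact hnp (mono x k hx.2 (by omega) hk)
    have := Finset.card_le_card hsub
    rw [Nat.card_Ico] at this
    omega

end ListPartition

namespace ListPartition

lemma exists_hook (lam : ListPartition) {i m : ℕ} (hi : i < lam.parts.length)
    (hm : m < lam.bet i) (hnb : ∀ l, l < lam.parts.length → lam.bet l ≠ m) :
    ∃ j, 1 ≤ j ∧ j ≤ lam.part i ∧ lam.hook i j = lam.bet i - m := by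
  set r := lam.parts.length with hr
  set u := ((Finset.range r).filter (fun k => lam.bet k < m)).card with hu
  -- the filter is up-closed
  have upc : ∀ k, k < r → (lam.bet k < m ↔ r - u ≤ k) := by
    intro k hk
    exact filter_upclosed (fun k => lam.bet k < m)
      (fun k k' hpk hkk' hk' => lt_of_le_of_lt (lam.bet_anti hkk' hk') hpk) hk
  -- u ≤ m
  have hum : u ≤ m := by
    have : ((Finset.range r).filter (fun k => lam.bet k < m)).card ≤ (Finset.range m).card :=
      Finset.card_le_card_of_injOn lam.bet
        (by intro k hk
            rw [Finset.mem_coe, Finset.mem_filter] at hk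
            rw [Finset.mem_coe, Finset.mem_range]
            exact hk.2)
        (by intro k hk k' hk' hbe
            simp only [Finset.coe_filter, Set.mem_setOf_eq, Finset.mem_range] at hk hk'
            by_contra hne
            rcases lt_or_gt_of_ne hne with h | h
            · exact (lam.bet_strict_anti h hk'.1).ne hbe.symm
            · exact (lam.bet_strict_anti h hk.1).ne hbe)
    rw [Finset.card_range] at this
    exact this
  -- i is not in the filter
  have hibet : ¬ (lam.bet i < m) := by omega
  have hiu : i + 1 ≤ r - u := by
    by_contra hcon
    exact hibet ((upc i hi).mpr (by omega))
  have hur : u + 1 ≤ r := by omega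
  set j := m + 1 - u with hj
  -- l := r - u - 1 is the last index not in the filter
  have hlbet : lam.bet (r - u - 1) ≥ m + 1 := by
    have h1 : ¬ (lam.bet (r - u - 1) < m) := by
      intro hcon
      have := (upc (r - u - 1) (by omega)).mp hcon
      omega
    have h2 := hnb (r - u - 1) (by omega)
    omega
  have hlpart : lam.part (r - u - 1) ≥ j := by
    have : lam.bet (r - u - 1) = lam.part (r - u - 1) + (r - 1 - (r - u - 1)) := rfl
    omega
  have hji : j ≤ lam.part i := le_trans hlpart (lam.part_anti (by omega))
  -- main claim: the two filters coincide
  have c1 : ∀ k, k ∈ Finset.range r →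
      ((fun k => i < k ∧ lam.part k < j) k ↔ (fun k => lam.bet k < m) k) := by
    intro k hk
    rw [Finset.mem_range] at hk
    constructor
    · rintro ⟨hik, hpk⟩
      rw [upc k hk]
      by_contra hcon
      have h1 : lam.part k ≥ lam.part (r - u - 1) := lam.part_anti (by omega)
      omega
    · intro hbk
      have hku : r - u ≤ k := (upc k hk).mp hbk
      have hu1 : 1 ≤ u := by omega
      have hik : i < k := by omega
      refine ⟨hik, ?_⟩
      -- bet k + k ≤ bet (r-u) + (r-u), bet (r-u) < m
      have h1 : lam.bet k + k ≤ lam.bet (r - u) + (r - u) :=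
        lam.bet_add_anti (by omega) (by omega) hk
      have h2 : lam.bet (r - u) < m := (upc (r - u) (by omega)).mpr (le_refl _)
      have h3 : lam.bet k = lam.part k + (r - 1 - k) := rfl
      omega
  have c3 : lam.tcnt i j = u := by
    rw [tcnt, hu, ← hr, Finset.filter_congr c1]
  refine ⟨j, by omega, hji, ?_⟩
  have := lam.hook_eq hi (by omega : 1 ≤ j) hji
  rw [c3] at this
  omega

end ListPartition

namespace ListPartition

lemma core_to_closed {A : Finset ℕ} {lam : ListPartition} (hcore : IsCore A lam) :
    ∀ n ∈ lam.beta, ∀ s ∈ A, 0 < s → s ≤ n → n - s ∈ lam.beta := by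
  intro n hn s hsA hs hsn
  rcases mem_beta.mp hn with ⟨i, hi, hbi⟩
  by_contra hns
  have hnb : ∀ l, l < lam.parts.length → lam.bet l ≠ n - s := by
    intro l hl hcon
    exact hns (mem_beta.mpr ⟨l, hl, hcon⟩)
  obtain ⟨j, hj1, hj2, hj3⟩ := lam.exists_hook hi (by omega) hnb
  have : lam.hook i j = s := by omega
  exact hcore i j hi hj1 hj2 (this ▸ hsA)

lemma closed_to_core {A : Finset ℕ} {lam : ListPartition}
    (hcl : ∀ n ∈ lam.beta, ∀ s ∈ A, s ≤ n → n - s ∈ lam.beta) : IsCore A lam := by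
  intro i j hi hj1 hj2 hmem
  set r := lam.parts.length with hr
  set s := lam.hook i j with hs
  set t := lam.tcnt i j with ht
  set m := j - 1 + t with hm
  have heq : s + m = lam.bet i := lam.hook_eq hi hj1 hj2
  have hs1 : 1 ≤ s := by rw [hs, hook]; omega
  have hnb : ∀ l, l < r → lam.bet l ≠ m := by
    intro l hl
    rcases le_or_gt l i with hli | hli
    · have := lam.bet_anti hli hi
      omega
    · have hbl : lam.bet l = lam.part l + (r - 1 - l) := rfl
      rcases le_or_gt j (lam.part l) with hjl | hjl
      · -- t ≤ r - 1 - l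
        have hsub : (Finset.range r).filter (fun k => i < k ∧ lam.part k < j)
            ⊆ Finset.Ico (l+1) r := by
          intro k hk
          rw [Finset.mem_filter, Finset.mem_range] at hk
          rw [Finset.mem_Ico]
          refine ⟨?_, hk.1⟩
          by_contra hcon
          have := lam.part_anti (show k ≤ l by omega)
          omega
        have h5 : t ≤ r - 1 - l := by
          have h6 := Finset.card_le_card hsub
          rw [Nat.card_Ico] at h6
          rw [ht, tcnt, ← hr]
          omega
        omega
      · -- t ≥ r - l
        have hsub : Finset.Ico l r ⊆
            (Finset.range r).filter (fun k => i < k ∧ lam.part k < j) := by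
          intro k hk
          rw [Finset.mem_Ico] at hk
          rw [Finset.mem_filter, Finset.mem_range]
          have := lam.part_anti hk.1
          exact ⟨hk.2, by omega, by omega⟩
        have h5 : r - l ≤ t := by
          have h6 := Finset.card_le_card hsub
          rw [Nat.card_Ico] at h6
          rw [ht, tcnt, ← hr]
          omega
        omega
  have hbm : lam.bet i - s = m := by omega
  have := hcl (lam.bet i) (mem_beta.mpr ⟨i, hi, rfl⟩) s hmem (by omega)
  rw [hbm] at this
  rcases mem_beta.mp this with ⟨l, hl, hbl⟩
  exact hnb l hl hbl

end ListPartition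

namespace ListPartition

lemma build (P : Finset ℕ) (hP : 0 ∉ P) :
    ∃ mu : ListPartition, mu.beta = P ∧ mu.parts.length = P.card := by
  classical
  set n := P.card with hn
  set l := P.sort (· ≤ ·) with hl
  have hlen : l.length = n := Finset.length_sort _
  set g : ℕ → ℕ := fun t => l.getD t 0 with hg
  have hmem : ∀ t, t < n → g t ∈ P := by
    intro t ht
    have ht' : t < l.length := by omega
    rw [hg]
    simp only [List.getD_eq_getElem _ _ ht']
    rw [← Finset.mem_sort (· ≤ ·)]
    exact List.getElem_mem _
  have hsl : l.Pairwise (· < ·) := List.sortedLT_iff_pairwise.mp (Finset.sortedLT_sort P)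
  have hmono : ∀ t t', t < t' → t' < n → g t < g t' := by
    intro t t' htt ht'
    have h1 : t < l.length := by omega
    have h2 : t' < l.length := by omega
    rw [hg]
    simp only [List.getD_eq_getElem _ _ h1, List.getD_eq_getElem _ _ h2]
    exact List.pairwise_iff_getElem.mp hsl t t' h1 h2 htt
  have hkey : ∀ dt t, t + dt < n → g t + dt ≤ g (t + dt) := by
    intro dt
    induction dt with
    | zero => intro t _; simp
    | succ k ih =>
      intro t ht
      have h1 := ih t (by omega)
      have h2 := hmono (t + k) (t + k + 1) (by omega) (by omega)
      have h3 : t + (k + 1) = t + k + 1 := by omega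
      rw [h3]
      omega
  have hpos : ∀ t, t < n → t + 1 ≤ g t := by
    intro t ht
    have h0 : g 0 ∈ P := hmem 0 (by omega)
    have h1 : 1 ≤ g 0 := by
      rcases Nat.eq_zero_or_pos (g 0) with h | h
      · rw [h] at h0; exact absurd h0 hP
      · exact h
    have h2 := hkey t 0 (by omega)
    rw [Nat.zero_add] at h2
    omega
  set parts : List ℕ := List.ofFn (fun i : Fin n => g (n - 1 - i) - (n - 1 - i)) with hparts
  have hplen : parts.length = n := by rw [hparts, List.length_ofFn]
  have hget : ∀ i (h : i < parts.length),
      parts[i] = g (n - 1 - i) - (n - 1 - i) := by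
    intro i h
    simp only [hparts, List.getElem_ofFn]
  have hsorted : parts.Pairwise (· ≥ ·) := by
    rw [List.pairwise_iff_getElem]
    intro i j hi hj hij
    rw [hget i hi, hget j hj]
    have h1 : n - 1 - j < n - 1 - i := by omega
    have h2 := hkey ((n - 1 - i) - (n - 1 - j)) (n - 1 - j) (by omega)
    have h3 : n - 1 - j + ((n - 1 - i) - (n - 1 - j)) = n - 1 - i := by omega
    rw [h3] at h2
    have h4 := hpos (n - 1 - j) (by omega)
    omega
  have hppos : ∀ x ∈ parts, 0 < x := by
    intro x hx
    rw [List.mem_iff_getElem] at hx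
    obtain ⟨i, hi, hxe⟩ := hx
    rw [hget i hi] at hxe
    have := hpos (n - 1 - i) (by rw [hplen] at hi; omega)
    omega
  refine ⟨⟨parts, hsorted, hppos⟩, ?_, hplen⟩
  ext x
  rw [mem_beta]
  simp only [hplen]
  constructor
  · rintro ⟨i, hi, hb⟩
    have hbe : bet ⟨parts, hsorted, hppos⟩ i = g (n - 1 - i) := by
      rw [bet, part]
      simp only [hplen]
      rw [List.getD_eq_getElem _ _ (by rw [hplen]; exact hi), hget i (by rw [hplen]; exact hi)]
      have := hpos (n - 1 - i) (by omega)
      omega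
    rw [hbe] at hb
    rw [← hb]
    exact hmem _ (by omega)
  · intro hx
    have : x ∈ l := by rw [hl, Finset.mem_sort]; exact hx
    rw [List.mem_iff_getElem] at this
    obtain ⟨t, ht, hxe⟩ := this
    rw [hlen] at ht
    refine ⟨n - 1 - t, by omega, ?_⟩
    have hnt : n - 1 - (n - 1 - t) = t := by omega
    rw [bet, part]
    simp only [hplen]
    rw [List.getD_eq_getElem _ _ (by rw [hplen]; omega),
      hget (n - 1 - t) (by rw [hplen]; omega), hnt]
    have h1 := hpos t ht
    have h2 : g t = x := by
      rw [hg]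
      simp only [List.getD_eq_getElem _ _ (by omega : t < l.length)]
      exact hxe
    omega

end ListPartition


lemma semiS_iff (a b c n : ℕ) :
    SemiS {a, b, c} n ↔ ∃ i j k : ℕ, n = i * a + j * b + k * c := by
  constructor
  · rintro ⟨f, rfl⟩
    by_cases hab : a = b
    · by_cases hac : a = c
      · subst hab; subst hac
        refine ⟨f a, 0, 0, ?_⟩
        simp
      · subst hab
        refine ⟨f a, 0, f c, ?_⟩
        rw [show ({a, a, c} : Finset ℕ) = {a, c} by simp]
        rw [Finset.sum_pair hac]
        ring
    · by_cases hac : a = c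
      · subst hac
        refine ⟨f a, f b, 0, ?_⟩
        rw [show ({a, b, a} : Finset ℕ) = {a, b} by ext x; simp; tauto]
        rw [Finset.sum_pair hab]
        ring
      · by_cases hbc : b = c
        · subst hbc
          refine ⟨f a, f b, 0, ?_⟩
          rw [show ({a, b, b} : Finset ℕ) = {a, b} by simp]
          rw [Finset.sum_pair hab]
          ring
        · refine ⟨f a, f b, f c, ?_⟩
          rw [Finset.sum_insert (by simp [hab, hac]), Finset.sum_pair hbc]
          ring
  · rintro ⟨i, j, k, rfl⟩
    refine ⟨fun x => (if x = a then i else 0) + (if x = b then j else 0) +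
      (if x = c then k else 0), ?_⟩
    simp only [add_mul, ite_mul, zero_mul, Finset.sum_add_distrib]
    rw [Finset.sum_ite_eq' _ a (fun x => i * x), Finset.sum_ite_eq' _ b (fun x => j * x),
      Finset.sum_ite_eq' _ c (fun x => k * x)]
    simp [mul_comm]


lemma one_le_factor {r x b : ℤ} (hr : 0 < r) (h : b = r * x) (hb : 1 ≤ b) : 1 ≤ x := by
  by_contra hx
  push_neg at hx
  have : r * x ≤ 0 := mul_nonpos_iff.mpr (Or.inl ⟨hr.le, by omega⟩)
  omega

set_option maxHeartbeats 1000000 in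
lemma F_not_rep {a b c p q r d e f : ℕ}
    (ha : 0 < a) (hb : 0 < b) (hc : 0 < c)
    (hd : 0 < d) (he : 0 < e) (hf : 0 < f)
    (habc : Nat.gcd (Nat.gcd a b) c = 1)
    (hp : p = Nat.gcd a b) (hq : q = Nat.gcd a c) (hr : r = Nat.gcd b c)
    (hda : a = d * p * q) (heb : b = e * p * r) (hfc : c = f * q * r)
    (hfS : ∃ i j : ℕ, f = i * d + j * e) :
    ¬ ∃ X Y Z : ℕ, ((d:ℤ) * e + f) * (p * q * r)
      = ((X:ℤ) + 1) * a + ((Y:ℤ) + 1) * b + ((Z:ℤ) + 1) * c := by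
  have hp0 : 0 < p := hp ▸ Nat.gcd_pos_of_pos_left _ ha
  have hq0 : 0 < q := hq ▸ Nat.gcd_pos_of_pos_left _ ha
  have hr0 : 0 < r := hr ▸ Nat.gcd_pos_of_pos_left _ hb
  have ha' : (a:ℤ) = (d:ℤ) * p * q := by exact_mod_cast hda
  have hb' : (b:ℤ) = (e:ℤ) * p * r := by exact_mod_cast heb
  have hc' : (c:ℤ) = (f:ℤ) * q * r := by exact_mod_cast hfc
  have hone : ∀ g : ℕ, g ∣ a → g ∣ b → g ∣ c → g = 1 := fun g h1 h2 h3 =>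
    Nat.dvd_one.mp (habc ▸ Nat.dvd_gcd (Nat.dvd_gcd h1 h2) h3)
  have hrb : r ∣ b := by rw [hr]; exact Nat.gcd_dvd_left b c
  have hrc : r ∣ c := by rw [hr]; exact Nat.gcd_dvd_right b c
  have hqa : q ∣ a := by rw [hq]; exact Nat.gcd_dvd_left a c
  have hqc : q ∣ c := by rw [hq]; exact Nat.gcd_dvd_right a c
  have hpa : p ∣ a := by rw [hp]; exact Nat.gcd_dvd_left a b
  have hpb : p ∣ b := by rw [hp]; exact Nat.gcd_dvd_right a b
  have hra : Nat.Coprime r a := hone _ (Nat.gcd_dvd_right r a)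
    ((Nat.gcd_dvd_left r a).trans hrb) ((Nat.gcd_dvd_left r a).trans hrc)
  have hqb : Nat.Coprime q b := hone _ ((Nat.gcd_dvd_left q b).trans hqa)
    (Nat.gcd_dvd_right q b) ((Nat.gcd_dvd_left q b).trans hqc)
  have hpc : Nat.Coprime p c := hone _ ((Nat.gcd_dvd_left p c).trans hpa)
    ((Nat.gcd_dvd_left p c).trans hpb) (Nat.gcd_dvd_right p c)
  -- coprimality of d and e
  have hcop2 : Nat.Coprime (d * q) (e * r) := by
    have h := hp
    rw [hda, heb, show d * p * q = p * (d * q) by ring, show e * p * r = p * (e * r) by ring,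
      Nat.gcd_mul_left] at h
    have : p * 1 = p * Nat.gcd (d * q) (e * r) := by omega
    exact (Nat.eq_of_mul_eq_mul_left hp0 this).symm
  have hde : Nat.Coprime d e :=
    Nat.Coprime.coprime_dvd_left (Dvd.intro q rfl)
      (Nat.Coprime.coprime_dvd_right (Dvd.intro r rfl) hcop2)
  -- now the main argument
  rintro ⟨X, Y, Z, heq⟩
  have hraZ : IsCoprime (r:ℤ) a := Nat.isCoprime_iff_coprime.mpr hra
  have hqbZ : IsCoprime (q:ℤ) b := Nat.isCoprime_iff_coprime.mpr hqb
  have hpcZ : IsCoprime (p:ℤ) c := Nat.isCoprime_iff_coprime.mpr hpc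
  have hdeZ : IsCoprime (d:ℤ) e := Nat.isCoprime_iff_coprime.mpr hde
  have hXa : (r:ℤ) ∣ ((X:ℤ) + 1) * a := by
    have h2 : ((X:ℤ) + 1) * a = ((d:ℤ) * e + f) * (p * q * r)
        - ((Y:ℤ) + 1) * b - ((Z:ℤ) + 1) * c := by linarith [heq]
    rw [h2]
    exact dvd_sub (dvd_sub ⟨((d:ℤ) * e + f) * (p * q), by ring⟩
      (Dvd.dvd.mul_left ⟨(e:ℤ) * p, by rw [hb']; ring⟩ _))
      (Dvd.dvd.mul_left ⟨(f:ℤ) * q, by rw [hc']; ring⟩ _)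
  have hYb : (q:ℤ) ∣ ((Y:ℤ) + 1) * b := by
    have h2 : ((Y:ℤ) + 1) * b = ((d:ℤ) * e + f) * (p * q * r)
        - ((X:ℤ) + 1) * a - ((Z:ℤ) + 1) * c := by linarith [heq]
    rw [h2]
    exact dvd_sub (dvd_sub ⟨((d:ℤ) * e + f) * (p * r), by ring⟩
      (Dvd.dvd.mul_left ⟨(d:ℤ) * p, by rw [ha']; ring⟩ _))
      (Dvd.dvd.mul_left ⟨(f:ℤ) * r, by rw [hc']; ring⟩ _)
  have hZc : (p:ℤ) ∣ ((Z:ℤ) + 1) * c := by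
    have h2 : ((Z:ℤ) + 1) * c = ((d:ℤ) * e + f) * (p * q * r)
        - ((X:ℤ) + 1) * a - ((Y:ℤ) + 1) * b := by linarith [heq]
    rw [h2]
    exact dvd_sub (dvd_sub ⟨((d:ℤ) * e + f) * (q * r), by ring⟩
      (Dvd.dvd.mul_left ⟨(d:ℤ) * q, by rw [ha']; ring⟩ _))
      (Dvd.dvd.mul_left ⟨(e:ℤ) * r, by rw [hb']; ring⟩ _)
  obtain ⟨X', hX'⟩ := hraZ.dvd_of_dvd_mul_right hXa
  obtain ⟨Y', hY'⟩ := hqbZ.dvd_of_dvd_mul_right hYb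
  obtain ⟨Z', hZ'⟩ := hpcZ.dvd_of_dvd_mul_right hZc
  have hr0' : (0:ℤ) < r := by exact_mod_cast hr0
  have hq0' : (0:ℤ) < q := by exact_mod_cast hq0
  have hp0' : (0:ℤ) < p := by exact_mod_cast hp0
  have hX'1 : 1 ≤ X' := one_le_factor hr0' hX' (by linarith [Int.natCast_nonneg X])
  have hY'1 : 1 ≤ Y' := one_le_factor hq0' hY' (by linarith [Int.natCast_nonneg Y])
  have hZ'1 : 1 ≤ Z' := one_le_factor hp0' hZ' (by linarith [Int.natCast_nonneg Z])
  have hpqr0 : ((p:ℤ) * q * r) ≠ 0 := by positivity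
  have key2 : ((p:ℤ) * q * r) * ((d:ℤ) * e + f)
      = ((p:ℤ) * q * r) * (X' * d + Y' * e + Z' * f) := by
    rw [ha', hb', hc'] at heq
    linear_combination heq + (d:ℤ) * p * q * hX' + (e:ℤ) * p * r * hY' + (f:ℤ) * q * r * hZ'
  have hde2 : (d:ℤ) * e + f = X' * d + Y' * e + Z' * f := mul_left_cancel₀ hpqr0 key2
  obtain ⟨i₀, j₀, hij⟩ := hfS
  have hij' : (f:ℤ) = (i₀:ℤ) * d + (j₀:ℤ) * e := by exact_mod_cast hij
  set A := X' + (Z' - 1) * i₀ with hA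
  set B := Y' + (Z' - 1) * j₀ with hB
  have hA1 : 1 ≤ A := by
    have : 0 ≤ (Z' - 1) * (i₀:ℤ) := mul_nonneg (by linarith) (Int.natCast_nonneg _)
    omega
  have hB1 : 1 ≤ B := by
    have : 0 ≤ (Z' - 1) * (j₀:ℤ) := mul_nonneg (by linarith) (Int.natCast_nonneg _)
    omega
  have hAB : (d:ℤ) * e = A * d + B * e := by
    rw [hA, hB]
    linear_combination hde2 + ((Z':ℤ) - 1) * hij'
  have hdvdB : (d:ℤ) ∣ B := hdeZ.dvd_of_dvd_mul_right ⟨e - A, by linear_combination -hAB⟩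
  obtain ⟨B', hB'⟩ := hdvdB
  have hd0' : (0:ℤ) < d := by exact_mod_cast hd
  have he0' : (0:ℤ) < e := by exact_mod_cast he
  have hB'1 : 1 ≤ B' := one_le_factor hd0' hB' hB1
  have hcancel : (e:ℤ) = A + B' * e := by
    have h3 : (d:ℤ) * e = d * (A + B' * e) := by
      rw [hB'] at hAB
      linear_combination hAB
    exact mul_left_cancel₀ (by positivity) h3
  have h10 : 0 ≤ (B' - 1) * e := mul_nonneg (by omega) he0'.le
  have h11 : (B' - 1) * (e:ℤ) = B' * e - e := by ring
  rw [h11] at h10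
  linarith

set_option maxHeartbeats 1000000 in
lemma gap_char {a b c p q r d e f : ℕ}
    (ha : 0 < a) (hb : 0 < b) (hc : 0 < c)
    (hd : 0 < d) (he : 0 < e) (hf : 0 < f)
    (habc : Nat.gcd (Nat.gcd a b) c = 1)
    (hp : p = Nat.gcd a b) (hq : q = Nat.gcd a c) (hr : r = Nat.gcd b c)
    (hda : a = d * p * q) (heb : b = e * p * r) (hfc : c = f * q * r)
    (hfS : ∃ i j : ℕ, f = i * d + j * e) :
    ∀ n : ℕ, GapS {a, b, c} n ↔
      ∃ i j k : ℕ, 1 ≤ i ∧ 1 ≤ j ∧ 1 ≤ k ∧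
        (n : ℤ) = ((d : ℤ) * e + f) * (p * q * r) - i * a - j * b - k * c := by
  have hp0 : 0 < p := hp ▸ Nat.gcd_pos_of_pos_left _ ha
  have hq0 : 0 < q := hq ▸ Nat.gcd_pos_of_pos_left _ ha
  have hr0 : 0 < r := hr ▸ Nat.gcd_pos_of_pos_left _ hb
  have ha' : (a:ℤ) = (d:ℤ) * p * q := by exact_mod_cast hda
  have hb' : (b:ℤ) = (e:ℤ) * p * r := by exact_mod_cast heb
  have hc' : (c:ℤ) = (f:ℤ) * q * r := by exact_mod_cast hfc
  have hone : ∀ g : ℕ, g ∣ a → g ∣ b → g ∣ c → g = 1 := fun g h1 h2 h3 =>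
    Nat.dvd_one.mp (habc ▸ Nat.dvd_gcd (Nat.dvd_gcd h1 h2) h3)
  have hpa : p ∣ a := by rw [hp]; exact Nat.gcd_dvd_left a b
  have hpb : p ∣ b := by rw [hp]; exact Nat.gcd_dvd_right a b
  have hpc : Nat.Coprime p c := hone _ ((Nat.gcd_dvd_left p c).trans hpa)
    ((Nat.gcd_dvd_left p c).trans hpb) (Nat.gcd_dvd_right p c)
  have hcop2 : Nat.Coprime (d * q) (e * r) := by
    have h := hp
    rw [hda, heb, show d * p * q = p * (d * q) by ring, show e * p * r = p * (e * r) by ring,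
      Nat.gcd_mul_left] at h
    have : p * 1 = p * Nat.gcd (d * q) (e * r) := by omega
    exact (Nat.eq_of_mul_eq_mul_left hp0 this).symm
  have hpcZ : IsCoprime (p:ℤ) c := Nat.isCoprime_iff_coprime.mpr hpc
  have hcop2Z : IsCoprime ((d:ℤ) * q) ((e:ℤ) * r) := by
    have := Nat.isCoprime_iff_coprime.mpr hcop2
    push_cast at this
    exact this
  have hFnot := F_not_rep ha hb hc hd he hf habc hp hq hr hda heb hfc hfS
  have hp0' : (0:ℤ) < p := by exact_mod_cast hp0
  have hdq0' : (0:ℤ) < (d:ℤ) * q := by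
    have : (0:ℤ) < d := by exact_mod_cast hd
    have : (0:ℤ) < q := by exact_mod_cast hq0
    positivity
  -- decomposition
  have decomp : ∀ n : ℤ, ∃ x y z : ℤ, 0 ≤ y ∧ y < (d:ℤ) * q ∧ 0 ≤ z ∧ z < p ∧
      n = x * a + y * b + z * c := by
    intro n
    obtain ⟨u, v, huv⟩ := hpcZ
    set z := (n * v) % p with hz
    have hz0 : 0 ≤ z := Int.emod_nonneg _ (by omega)
    have hzp : z < p := Int.emod_lt_of_pos _ hp0'
    have hzdef : z = n * v - p * (n * v / p) := by rw [hz, Int.emod_def]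
    set t := n * v / p with ht
    set m := n * u + t * c with hm
    have hnm : n = p * m + z * c := by
      rw [hm, hzdef]
      linear_combination -n * huv
    obtain ⟨u2, v2, huv2⟩ := hcop2Z
    set y := (m * v2) % ((d:ℤ) * q) with hy
    have hy0 : 0 ≤ y := Int.emod_nonneg _ (by omega)
    have hyq : y < (d:ℤ) * q := Int.emod_lt_of_pos _ hdq0'
    have hydef : y = m * v2 - (d:ℤ) * q * (m * v2 / ((d:ℤ) * q)) := by rw [hy, Int.emod_def]
    set s := m * v2 / ((d:ℤ) * q) with hs
    set x := m * u2 + s * ((e:ℤ) * r) with hx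
    have hmx : m = (d:ℤ) * q * x + y * ((e:ℤ) * r) := by
      rw [hx, hydef]
      linear_combination -m * huv2
    refine ⟨x, y, z, hy0, hyq, hz0, hzp, ?_⟩
    rw [ha', hb', hc']
    rw [hmx] at hnm
    linear_combination hnm + z * hc'
  intro n
  have hSZ : SemiS {a, b, c} n ↔ ∃ i j k : ℕ, (n:ℤ) = i * a + j * b + k * c := by
    rw [semiS_iff]
    constructor
    · rintro ⟨i, j, k, h⟩; exact ⟨i, j, k, by exact_mod_cast h⟩
    · rintro ⟨i, j, k, h⟩; exact ⟨i, j, k, by exact_mod_cast h⟩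
  have hN : ((d:ℤ) * e + f) * (p * q * r) = ((d:ℤ) * q) * b + p * c := by
    rw [hb', hc']; ring
  constructor
  · rintro ⟨hn0, hnS⟩
    obtain ⟨x, y, z, hy0, hyq, hz0, hzp, hdec⟩ := decomp n
    by_cases hx0 : 0 ≤ x
    · exfalso
      lift x to ℕ using hx0
      lift y to ℕ using hy0
      lift z to ℕ using hz0
      exact hnS (hSZ.mpr ⟨x, y, z, hdec⟩)
    · push_neg at hx0
      refine ⟨(-x).toNat, ((d:ℤ) * q - y).toNat, ((p:ℤ) - z).toNat, ?_, ?_, ?_, ?_⟩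
      · have : 1 ≤ -x := by omega
        omega
      · have : 1 ≤ (d:ℤ) * q - y := by omega
        omega
      · have : 1 ≤ (p:ℤ) - z := by omega
        omega
      · rw [Int.toNat_of_nonneg (by omega : (0:ℤ) ≤ -x),
          Int.toNat_of_nonneg (by omega : (0:ℤ) ≤ (d:ℤ) * q - y),
          Int.toNat_of_nonneg (by omega : (0:ℤ) ≤ (p:ℤ) - z), hN]
        linear_combination hdec
  · rintro ⟨i, j, k, hi, hj, hk, heq⟩
    obtain ⟨i', rfl⟩ : ∃ i', i = i' + 1 := ⟨i - 1, by omega⟩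
    obtain ⟨j', rfl⟩ : ∃ j', j = j' + 1 := ⟨j - 1, by omega⟩
    obtain ⟨k', rfl⟩ : ∃ k', k = k' + 1 := ⟨k - 1, by omega⟩
    push_cast at heq
    have hnS : ¬ SemiS {a, b, c} n := by
      intro hS
      obtain ⟨x', y', z', hx⟩ := hSZ.mp hS
      exact hFnot ⟨x' + i', y' + j', z' + k', by push_cast; linear_combination hx - heq⟩
    refine ⟨?_, hnS⟩
    rcases Nat.eq_zero_or_pos n with rfl | h
    · exact absurd ⟨fun _ => 0, by simp⟩ hnS
    · exact h


theorem maximal_core_description (a b c p q r d e f : ℕ)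
    (ha : 0 < a) (hb : 0 < b) (hc : 0 < c)
    (hd : 0 < d) (he : 0 < e) (hf : 0 < f)
    (habc : Nat.gcd (Nat.gcd a b) c = 1)
    (hp : p = Nat.gcd a b) (hq : q = Nat.gcd a c) (hr : r = Nat.gcd b c)
    (hda : a = d * p * q) (heb : b = e * p * r) (hfc : c = f * q * r)
    (hfS : ∃ i j : ℕ, f = i * d + j * e)
    (hUM : UM {a, b, c}) :
    (∀ n : ℕ, GapS {a, b, c} n ↔
      ∃ i j k : ℕ, 1 ≤ i ∧ 1 ≤ j ∧ 1 ≤ k ∧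
        (n : ℤ) = ((d : ℤ) * e + f) * (p * q * r) - i * a - j * b - k * c) ∧
    ∀ κ : ListPartition, ListPartition.IsCore {a, b, c} κ →
      (∀ μ : ListPartition, ListPartition.IsCore {a, b, c} μ → μ.Sub κ) →
      ∀ n : ℕ, n ∈ κ.beta ↔
        ∃ i j k : ℕ, 1 ≤ i ∧ 1 ≤ j ∧ 1 ≤ k ∧
          (n : ℤ) = ((d : ℤ) * e + f) * (p * q * r) - i * a - j * b - k * c := by
  classical
  have part1 := gap_char ha hb hc hd he hf habc hp hq hr hda heb hfc hfS
  refine ⟨part1, ?_⟩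
  intro kap hcore hmax n
  rw [← part1 n]
  set Nn : ℕ := (d * e + f) * (p * q * r) with hNn
  have hgap_lt : ∀ m : ℕ, GapS {a, b, c} m → m < Nn := by
    intro m hm
    obtain ⟨i, j, k, hi, hj, hk, heq⟩ := (part1 m).mp hm
    have hia : (a:ℤ) ≤ (i:ℤ) * a := le_mul_of_one_le_left (by positivity) (by exact_mod_cast hi)
    have hjb : (b:ℤ) ≤ (j:ℤ) * b := le_mul_of_one_le_left (by positivity) (by exact_mod_cast hj)
    have hkc : (c:ℤ) ≤ (k:ℤ) * c := le_mul_of_one_le_left (by positivity) (by exact_mod_cast hk)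
    have ha' : (0:ℤ) < a := by exact_mod_cast ha
    have hb' : (0:ℤ) < b := by exact_mod_cast hb
    have hc' : (0:ℤ) < c := by exact_mod_cast hc
    have hmN : (m:ℤ) < ((Nn:ℕ):ℤ) := by
      have hcast : ((Nn:ℕ):ℤ) = ((d:ℤ) * e + f) * (p * q * r) := by rw [hNn]; push_cast; ring
      rw [hcast]
      linarith
    exact_mod_cast hmN
  set P : Finset ℕ := (Finset.range Nn).filter (fun m => GapS {a, b, c} m) with hP
  have hPmem : ∀ m, m ∈ P ↔ GapS {a, b, c} m := by
    intro m
    rw [hP, Finset.mem_filter, Finset.mem_range]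
    exact ⟨fun h => h.2, fun h => ⟨hgap_lt m h, h⟩⟩
  have hgenpos : ∀ s ∈ ({a, b, c} : Finset ℕ), 0 < s := by
    intro s hs
    simp only [Finset.mem_insert, Finset.mem_singleton] at hs
    rcases hs with rfl | rfl | rfl <;> assumption
  have hgenS : ∀ s ∈ ({a, b, c} : Finset ℕ), SemiS {a, b, c} s := by
    intro s hs
    simp only [Finset.mem_insert, Finset.mem_singleton] at hs
    rw [semiS_iff]
    rcases hs with rfl | rfl | rfl
    · exact ⟨1, 0, 0, by ring⟩
    · exact ⟨0, 1, 0, by ring⟩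
    · exact ⟨0, 0, 1, by ring⟩
  -- every beta element is a gap
  have claim1 : ∀ m : ℕ, m ∈ kap.beta → ¬ SemiS {a, b, c} m := by
    intro m
    induction m using Nat.strong_induction_on with
    | _ m ih =>
      intro hmb hsem
      obtain ⟨i, j, k, hrep⟩ := (semiS_iff a b c m).mp hsem
      have key : ∀ (s i' j' k' : ℕ), s ∈ ({a, b, c} : Finset ℕ) →
          m = (i' * a + j' * b + k' * c) + s → False := by
        intro s i' j' k' hs hmeq
        have hs0 : 0 < s := hgenpos s hs
        have hsm : s ≤ m := hmeq ▸ Nat.le_add_left s _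
        have hmb2 := ListPartition.core_to_closed hcore m hmb s hs hs0 hsm
        have hsub : m - s = i' * a + j' * b + k' * c := by rw [hmeq, Nat.add_sub_cancel]
        exact ih (m - s) (by omega) hmb2 ((semiS_iff a b c _).mpr ⟨i', j', k', hsub⟩)
      rcases Nat.eq_zero_or_pos i with rfl | hi
      · rcases Nat.eq_zero_or_pos j with rfl | hj
        · rcases Nat.eq_zero_or_pos k with rfl | hk
          · simp only [Nat.zero_mul, Nat.add_zero, Nat.zero_add] at hrep
            subst hrep
            exact kap.zero_not_mem_beta hmb
          · obtain ⟨k', rfl⟩ : ∃ k', k = k' + 1 := ⟨k - 1, by omega⟩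
            exact key c 0 0 k' (by simp) (by rw [hrep]; ring)
        · obtain ⟨j', rfl⟩ : ∃ j', j = j' + 1 := ⟨j - 1, by omega⟩
          exact key b 0 j' k (by simp) (by rw [hrep]; ring)
      · obtain ⟨i', rfl⟩ : ∃ i', i = i' + 1 := ⟨i - 1, by omega⟩
        exact key a i' j k (by simp) (by rw [hrep]; ring)
  have claim2 : kap.beta ⊆ P := by
    intro m hmb
    rw [hPmem]
    refine ⟨?_, claim1 m hmb⟩
    rcases Nat.eq_zero_or_pos m with rfl | h
    · exact absurd hmb kap.zero_not_mem_beta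
    · exact h
  have h0P : 0 ∉ P := by
    rw [hPmem]
    rintro ⟨h, -⟩
    exact absurd h (lt_irrefl 0)
  have claim3 : P ⊆ kap.beta := by
    by_contra hns
    obtain ⟨g, hgP, hgnb⟩ := Finset.not_subset.mp hns
    obtain ⟨mu, hmubeta, hmulen⟩ := ListPartition.build P h0P
    have hmucore : ListPartition.IsCore {a, b, c} mu := by
      apply ListPartition.closed_to_core
      intro m hm s hs hsm
      rw [hmubeta] at hm ⊢
      rw [hPmem] at hm ⊢
      obtain ⟨hm0, hmS⟩ := hm
      have hsS := hgenS s hs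
      constructor
      · have : m ≠ s := fun h => hmS (h ▸ hsS)
        have := hgenpos s hs
        omega
      · intro hsub
        obtain ⟨i, j, k, hrep⟩ := (semiS_iff a b c _).mp hsub
        obtain ⟨i2, j2, k2, hrep2⟩ := (semiS_iff a b c _).mp hsS
        apply hmS
        rw [semiS_iff]
        refine ⟨i + i2, j + j2, k + k2, ?_⟩
        have hms : m = (m - s) + s := by omega
        rw [hms, hrep, hrep2]
        ring
    have hsubp := hmax mu hmucore
    have hlen : mu.parts.length ≤ kap.parts.length := hsubp.1
    have hcard : kap.beta.card < P.card :=
      Finset.card_lt_card ((Finset.ssubset_iff_of_subset claim2).mpr ⟨g, hgP, hgnb⟩)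
    rw [ListPartition.card_beta] at hcard
    omega
  constructor
  · intro h
    exact (hPmem n).mp (claim2 h)
  · intro h
    exact claim3 ((hPmem n).mpr h)
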